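/- For every integer d > 1 and every odd prime p that divides d − 7 in ℤ (in particular, for every odd prime p when d = 7), there exists a symmetric matrix G over ZMod p of size n×n, where n = d(d+1)/2 = binom(d+1, 2), such that G_{ii} = 3 for every i, (G_{ij})² = 1 for all i ≠ j, G² = 12·G, and rank G = d. That is, a (3,1,12)-equiangular tight frame of n = binom(d+1,2) vectors exists in a d-dimensional orthogonal geometry over 𝔽_p, attaining Gerzon's bound n = binom(d+1,2). -/
import Mathlib

open Matrix Finset Module

set_option linter.unusedSectionVars false
set_option maxHeartbeats 1000000

abbrev ETFAux.Idx (d : ℕ) := {s : Finset (Fin (d+1)) // s.card = 2}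

namespace ETFAux


variable (p d : ℕ)

/-- the shifted incidence matrix: entries `3` on incidence, `-1` off. -/
def NW : Matrix (Idx d) (Fin (d+1)) (ZMod p) :=
  Matrix.of fun s i => (if i ∈ s.1 then 4 else 0) - 1

/-- the Gram matrix of the ETF. -/
def GM : Matrix (Idx d) (Idx d) (ZMod p) :=
  Matrix.of fun s t => 2 * ((s.1 ∩ t.1).card : ZMod p) - 1

def Jm : Matrix (Fin (d+1)) (Fin (d+1)) (ZMod p) := Matrix.of fun _ _ => 1

lemma card_filter_mem (i : Fin (d+1)) :
    (Finset.univ.filter (fun s : Idx d => i ∈ s.1)).card = d := by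
  have h : ((Finset.univ : Finset (Fin (d+1))).erase i).card = d := by
    rw [Finset.card_erase_of_mem (Finset.mem_univ i), Finset.card_univ, Fintype.card_fin]
    omega
  refine Eq.trans ?_ h; symm
  apply Finset.card_bij (fun b hb => (⟨({i, b} : Finset (Fin (d+1))), by
      have hbi : b ≠ i := by simpa using (Finset.mem_erase.mp hb).1
      rw [Finset.card_insert_of_notMem (by simpa using hbi.symm), Finset.card_singleton]⟩ : Idx d))
  · intro b hb
    simp
  · intro b hb c hc hbc
    have hb' : b ≠ i := by simpa using (Finset.mem_erase.mp hb).1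
    have : ({i, b} : Finset (Fin (d+1))) = {i, c} := congrArg Subtype.val hbc
    have hbm : b ∈ ({i, c} : Finset (Fin (d+1))) := by rw [← this]; simp
    rcases Finset.mem_insert.mp hbm with h' | h'
    · exact absurd h' hb'
    · exact Finset.mem_singleton.mp h'
  · intro s hs
    have hi : i ∈ s.1 := by simpa using hs
    have hcard : (s.1.erase i).card = 1 := by
      rw [Finset.card_erase_of_mem hi, s.2]
    obtain ⟨b, hb⟩ := Finset.card_eq_one.mp hcard
    have hbmem : b ∈ s.1.erase i := by rw [hb]; simp
    have hbi : b ≠ i := (Finset.mem_erase.mp hbmem).1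
    refine ⟨b, by simp [hbi], ?_⟩
    apply Subtype.ext
    show ({i, b} : Finset (Fin (d+1))) = s.1
    have : insert i (s.1.erase i) = s.1 := Finset.insert_erase hi
    rw [← this, hb]

lemma card_filter_mem_pair {i j : Fin (d+1)} (h : i ≠ j) :
    (Finset.univ.filter (fun s : Idx d => i ∈ s.1 ∧ j ∈ s.1)).card = 1 := by
  have hpf : ({i, j} : Finset (Fin (d+1))).card = 2 := by
    rw [Finset.card_insert_of_notMem (by simpa using h), Finset.card_singleton]
  rw [Finset.card_eq_one]
  refine ⟨⟨{i, j}, hpf⟩, ?_⟩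
  ext s
  simp only [Finset.mem_filter, Finset.mem_univ, true_and, Finset.mem_singleton]
  constructor
  · rintro ⟨hi, hj⟩
    apply Subtype.ext
    have hsub : ({i, j} : Finset (Fin (d+1))) ⊆ s.1 := by
      intro x hx
      rcases Finset.mem_insert.mp hx with hx | hx
      · subst hx; exact hi
      · rw [Finset.mem_singleton.mp hx]; exact hj
    have : s.1.card ≤ ({i, j} : Finset (Fin (d+1))).card := by rw [hpf, s.2]
    exact (Finset.eq_of_subset_of_card_le hsub this).symm
  · rintro rfl
    constructor <;> simp

lemma card_Idx : Fintype.card (Idx d) = (d+1).choose 2 := by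
  rw [Fintype.card_finset_len, Fintype.card_fin]

lemma two_mul_choose : 2 * (d+1).choose 2 = (d+1) * d := by
  rw [Nat.choose_two_right]
  have h2 : 2 ∣ (d+1) * d := by
    rcases Nat.even_or_odd d with h | h
    · exact Dvd.dvd.mul_left h.two_dvd _
    · exact Dvd.dvd.mul_right h.add_one.two_dvd _
  simp
  omega


end ETFAux

namespace ETFAux

variable (p d : ℕ)
variable {p d}
variable [Fact p.Prime]

lemma sum_ind (i : Fin (d+1)) :
    (∑ s : Idx d, if i ∈ s.1 then (1 : ZMod p) else 0) = (d : ZMod p) := by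
  rw [Finset.sum_boole, card_filter_mem]

lemma sum_ind_pair {i j : Fin (d+1)} (h : i ≠ j) :
    (∑ s : Idx d, if i ∈ s.1 ∧ j ∈ s.1 then (1 : ZMod p) else 0) = 1 := by
  rw [Finset.sum_boole, card_filter_mem_pair d h, Nat.cast_one]

lemma choose_cast (h2 : (2 : ZMod p) ≠ 0) (h7 : (d : ZMod p) = 7) :
    (((d+1).choose 2 : ℕ) : ZMod p) = 28 := by
  apply mul_left_cancel₀ h2
  have h' := congrArg (Nat.cast : ℕ → ZMod p) (two_mul_choose d)
  push_cast at h'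
  rw [h', h7]; norm_num

lemma sum_one_Idx (h2 : (2 : ZMod p) ≠ 0) (h7 : (d : ZMod p) = 7) :
    (∑ _s : Idx d, (1 : ZMod p)) = 28 := by
  rw [Finset.sum_const, Finset.card_univ, card_Idx, nsmul_eq_mul, mul_one,
    choose_cast h2 h7]

lemma entry_key (P Q : Prop) [Decidable P] [Decidable Q] :
    ((if P then (4 : ZMod p) else 0) - 1) * ((if Q then (4 : ZMod p) else 0) - 1)
      = 16 * (if P ∧ Q then 1 else 0) - 4 * (if P then 1 else 0)
        - 4 * (if Q then 1 else 0) + 1 := by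
  by_cases hP : P <;> by_cases hQ : Q <;> simp [hP, hQ] <;> ring

lemma WtW (h2 : (2 : ZMod p) ≠ 0) (h7 : (d : ZMod p) = 7) :
    (NW p d)ᵀ * NW p d = (96 : ZMod p) • 1 - (12 : ZMod p) • Jm p d := by
  ext i j
  simp only [Matrix.mul_apply, Matrix.transpose_apply, NW, Matrix.of_apply,
    Matrix.sub_apply, Matrix.smul_apply, Matrix.one_apply, Jm, smul_eq_mul]
  rw [Finset.sum_congr rfl (fun s _ => entry_key (i ∈ s.1) (j ∈ s.1))]
  rw [Finset.sum_add_distrib, Finset.sum_sub_distrib, Finset.sum_sub_distrib,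
    ← Finset.mul_sum, ← Finset.mul_sum, ← Finset.mul_sum]
  rw [sum_ind i, sum_ind j, sum_one_Idx h2 h7, h7]
  by_cases hij : i = j
  · subst hij
    simp only [and_self]
    rw [sum_ind i, h7]
    simp; norm_num
  · rw [sum_ind_pair hij]
    simp [hij]; norm_num

lemma WWt (h7 : (d : ZMod p) = 7) :
    NW p d * (NW p d)ᵀ = (8 : ZMod p) • GM p d := by
  ext s t
  simp only [Matrix.mul_apply, Matrix.transpose_apply, NW, GM, Matrix.of_apply,
    Matrix.smul_apply, smul_eq_mul]
  rw [Finset.sum_congr rfl (fun i _ => entry_key (i ∈ s.1) (i ∈ t.1))]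
  rw [Finset.sum_add_distrib, Finset.sum_sub_distrib, Finset.sum_sub_distrib,
    ← Finset.mul_sum, ← Finset.mul_sum, ← Finset.mul_sum]
  have hs : (∑ i : Fin (d+1), if i ∈ s.1 then (1 : ZMod p) else 0) = 2 := by
    rw [Finset.sum_boole]
    rw [show Finset.univ.filter (fun i => i ∈ s.1) = s.1 by
      ext x; simp]
    rw [s.2]; norm_num
  have ht : (∑ i : Fin (d+1), if i ∈ t.1 then (1 : ZMod p) else 0) = 2 := by
    rw [Finset.sum_boole]
    rw [show Finset.univ.filter (fun i => i ∈ t.1) = t.1 by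
      ext x; simp]
    rw [t.2]; norm_num
  have hst : (∑ i : Fin (d+1), if i ∈ s.1 ∧ i ∈ t.1 then (1 : ZMod p) else 0)
      = ((s.1 ∩ t.1).card : ZMod p) := by
    rw [Finset.sum_boole]
    congr 1
    rw [show Finset.univ.filter (fun i => i ∈ s.1 ∧ i ∈ t.1) = s.1 ∩ t.1 by
      ext x; simp [Finset.mem_inter]]
  rw [hs, ht, hst]
  have hone : (∑ _i : Fin (d+1), (1 : ZMod p)) = 8 := by
    rw [Finset.sum_const, Finset.card_univ, Fintype.card_fin, nsmul_eq_mul, mul_one]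
    push_cast [h7]; norm_num
  rw [hone]; ring

lemma WJ (h7 : (d : ZMod p) = 7) : NW p d * Jm p d = 0 := by
  ext s j
  simp only [Matrix.mul_apply, NW, Jm, Matrix.of_apply, Matrix.zero_apply, mul_one]
  rw [Finset.sum_sub_distrib]
  have hs : (∑ i : Fin (d+1), if i ∈ s.1 then (4 : ZMod p) else 0) = 8 := by
    rw [Finset.sum_ite_mem]
    simp only [Finset.univ_inter, Finset.sum_const, nsmul_eq_mul]
    rw [s.2]; norm_num
  have hone : (∑ _i : Fin (d+1), (1 : ZMod p)) = 8 := by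
    rw [Finset.sum_const, Finset.card_univ, Fintype.card_fin, nsmul_eq_mul, mul_one]
    push_cast [h7]; norm_num
  rw [hs, hone, sub_self]

lemma JWt (h7 : (d : ZMod p) = 7) : Jm p d * (NW p d)ᵀ = 0 := by
  have hJt : (Jm p d)ᵀ = Jm p d := by ext i j; rfl
  have := congrArg Matrix.transpose (WJ (p := p) h7)
  rwa [Matrix.transpose_mul, Matrix.transpose_zero, hJt] at this

lemma GM_mul_GM (h2 : (2 : ZMod p) ≠ 0) (h7 : (d : ZMod p) = 7) :
    GM p d * GM p d = (12 : ZMod p) • GM p d := by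
  have h64 : (64 : ZMod p) ≠ 0 := by
    intro h
    apply h2
    have : (64 : ZMod p) = 2^6 := by norm_num
    rw [this] at h
    exact pow_eq_zero_iff (by norm_num) |>.mp h
  have key : ((8 : ZMod p) • GM p d) * ((8 : ZMod p) • GM p d)
      = (96 : ZMod p) • ((8 : ZMod p) • GM p d) := by
    rw [← WWt h7]
    calc NW p d * (NW p d)ᵀ * (NW p d * (NW p d)ᵀ)
        = NW p d * (((NW p d)ᵀ * NW p d) * (NW p d)ᵀ) := by
          simp only [Matrix.mul_assoc]
      _ = (96 : ZMod p) • (NW p d * (NW p d)ᵀ) := by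
          rw [WtW h2 h7, Matrix.sub_mul, Matrix.smul_mul, Matrix.one_mul,
            Matrix.smul_mul, JWt h7, smul_zero, sub_zero, Matrix.mul_smul]
  have key2 : (64 : ZMod p) • (GM p d * GM p d) = (64 : ZMod p) • ((12 : ZMod p) • GM p d) := by
    have lhs : ((8 : ZMod p) • GM p d) * ((8 : ZMod p) • GM p d)
        = (64 : ZMod p) • (GM p d * GM p d) := by
      rw [Matrix.smul_mul, Matrix.mul_smul, smul_smul]; norm_num
    have rhs : (96 : ZMod p) • ((8 : ZMod p) • GM p d)
        = (64 : ZMod p) • ((12 : ZMod p) • GM p d) := by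
      rw [smul_smul, smul_smul]; norm_num
    rw [← lhs, key, rhs]
  have := congrArg (fun M => (64 : ZMod p)⁻¹ • M) key2
  simpa [smul_smul, ← mul_assoc, inv_mul_cancel₀ h64] using this


end ETFAux

namespace ETFAux

variable (p d : ℕ)
variable {p d}
variable [Fact p.Prime]
lemma GM_isSymm : (GM p d).IsSymm := by
  ext s t
  simp [GM, Matrix.transpose_apply, Finset.inter_comm]

lemma GM_diag (s : Idx d) : GM p d s s = 3 := by
  simp only [GM, Matrix.of_apply, Finset.inter_self, s.2]
  norm_num

lemma GM_offdiag {s t : Idx d} (h : s ≠ t) : (GM p d s t)^2 = 1 := by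
  have hcard : (s.1 ∩ t.1).card = 0 ∨ (s.1 ∩ t.1).card = 1 := by
    have hle : (s.1 ∩ t.1).card ≤ 2 :=
      le_trans (Finset.card_le_card Finset.inter_subset_left) (le_of_eq s.2)
    by_contra hc
    push_neg at hc
    have h2 : (s.1 ∩ t.1).card = 2 := by omega
    have hs : s.1 ∩ t.1 = s.1 :=
      Finset.eq_of_subset_of_card_le Finset.inter_subset_left (by omega)
    have ht : s.1 ∩ t.1 = t.1 :=
      Finset.eq_of_subset_of_card_le Finset.inter_subset_right (by rw [t.2, h2])
    exact h (Subtype.ext (hs ▸ ht))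
  rcases hcard with hc | hc <;>
    · simp only [GM, Matrix.of_apply, hc]
      norm_num

lemma NW_mulVec_one (h7 : (d : ZMod p) = 7) : NW p d *ᵥ (fun _ => (1 : ZMod p)) = 0 := by
  funext s
  have : (NW p d *ᵥ (fun _ => (1 : ZMod p))) s = (NW p d * Jm p d) s 0 := by
    simp [Matrix.mulVec, dotProduct, Matrix.mul_apply, Jm]
  rw [this, WJ h7]
  rfl

lemma rank_NW_le (h7 : (d : ZMod p) = 7) : (NW p d).rank ≤ d := by
  have hrn := LinearMap.finrank_range_add_finrank_ker (NW p d).mulVecLin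
  have hdim : finrank (ZMod p) (Fin (d+1) → ZMod p) = d + 1 := by
    rw [Module.finrank_fintype_fun_eq_card, Fintype.card_fin]
  have hker : 0 < finrank (ZMod p) (LinearMap.ker (NW p d).mulVecLin) := by
    rw [Module.finrank_pos_iff_exists_ne_zero]
    refine ⟨⟨(fun _ => 1), ?_⟩, ?_⟩
    · rw [LinearMap.mem_ker, Matrix.mulVecLin_apply, NW_mulVec_one h7]
    · intro hzero
      simpa using congrFun (congrArg Subtype.val hzero) 0
  have hrank : (NW p d).rank = finrank (ZMod p) (LinearMap.range (NW p d).mulVecLin) := rfl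
  omega

lemma rank_GM_le (h2 : (2 : ZMod p) ≠ 0) (h7 : (d : ZMod p) = 7) : (GM p d).rank ≤ d := by
  have h8 : (8 : ZMod p) ≠ 0 := by
    intro h
    apply h2
    have : (8 : ZMod p) = 2^3 := by norm_num
    rw [this] at h
    exact pow_eq_zero_iff (by norm_num) |>.mp h
  have hfact : GM p d = (((8 : ZMod p)⁻¹) • NW p d) * (NW p d)ᵀ := by
    rw [Matrix.smul_mul, WWt h7, smul_smul, inv_mul_cancel₀ h8, one_smul]
  calc (GM p d).rank ≤ ((NW p d)ᵀ).rank := by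
        rw [hfact]; exact Matrix.rank_mul_le_right _ _
    _ = (NW p d).rank := Matrix.rank_transpose _
    _ ≤ d := rank_NW_le h7


end ETFAux

namespace ETFAux

variable (p d : ℕ)
def vOne : Fin d → ZMod p := fun _ => 1
def vZ : Fin d → ZMod p := fun i => if 2 ≤ (i : ℕ) ∧ (i : ℕ) < d - 1 then 1 else 0
def vE : Fin d → ZMod p := fun i => if (i : ℕ) = d - 1 then 1 else 0

def Bmat : Matrix (Fin d) (Fin d) (ZMod p) :=
  (2 : ZMod p) • 1 + vecMulVec (vOne p d) (vOne p d)
    - (2 : ZMod p) • (vecMulVec (vZ p d) (vE p d) + vecMulVec (vE p d) (vZ p d))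

def Cmat : Matrix (Fin d) (Fin d) (ZMod p) :=
  (2 : ZMod p) • 1 + (6 : ZMod p) • vecMulVec (vOne p d) (vOne p d)
    - (10 : ZMod p) • (vecMulVec (vOne p d) (vZ p d) + vecMulVec (vZ p d) (vOne p d))
    - (16 : ZMod p) • (vecMulVec (vOne p d) (vE p d) + vecMulVec (vE p d) (vOne p d))
    + (16 : ZMod p) • vecMulVec (vZ p d) (vZ p d)
    + (26 : ZMod p) • (vecMulVec (vZ p d) (vE p d) + vecMulVec (vE p d) (vZ p d))
    + (40 : ZMod p) • vecMulVec (vE p d) (vE p d)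

def C2mat : Matrix (Fin d) (Fin d) (ZMod p) :=
  (3 : ZMod p) • 1 + (3 : ZMod p) • vecMulVec (vOne p d) (vOne p d)

variable {p d}

lemma EE (a b c e : Fin d → ZMod p) :
    vecMulVec a b * vecMulVec c e = (b ⬝ᵥ c) • vecMulVec a e := by
  ext i j
  simp only [Matrix.mul_apply, Matrix.vecMulVec_apply, Matrix.smul_apply,
    dotProduct, smul_eq_mul, Finset.sum_mul]
  apply Finset.sum_congr rfl
  intros; ring

lemma dot_oo (h7 : (d : ZMod p) = 7) : vOne p d ⬝ᵥ vOne p d = (7 : ZMod p) := by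
  simp only [dotProduct, vOne, mul_one, Finset.sum_const, Finset.card_univ,
    Fintype.card_fin, nsmul_eq_mul, mul_one]
  rw [h7]

lemma sum_z (h7 : (d : ZMod p) = 7) (h3 : 3 ≤ d) :
    (∑ i : Fin d, vZ p d i) = (4 : ZMod p) := by
  unfold vZ
  rw [Fin.sum_univ_eq_sum_range (fun n => if 2 ≤ n ∧ n < d - 1 then (1 : ZMod p) else 0)]
  rw [Finset.sum_boole]
  have : (Finset.range d).filter (fun n => 2 ≤ n ∧ n < d - 1) = Finset.Ico 2 (d-1) := by
    ext n
    simp only [Finset.mem_filter, Finset.mem_range, Finset.mem_Ico]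
    omega
  rw [this, Nat.card_Ico]
  have hcast : ((d - 1 - 2 : ℕ) : ZMod p) = (d : ZMod p) - 3 := by
    have : (d : ℕ) - 1 - 2 = d - 3 := by omega
    rw [this, Nat.cast_sub (by omega)]
    norm_num
  rw [hcast, h7]; norm_num

lemma sum_e (h0 : 0 < d) : (∑ i : Fin d, vE p d i) = (1 : ZMod p) := by
  unfold vE
  rw [Fin.sum_univ_eq_sum_range (fun n => if n = d - 1 then (1 : ZMod p) else 0)]
  rw [Finset.sum_boole]
  have : (Finset.range d).filter (fun n => n = d - 1) = {d - 1} := by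
    ext n
    simp only [Finset.mem_filter, Finset.mem_range, Finset.mem_singleton]
    omega
  rw [this, Finset.card_singleton, Nat.cast_one]

lemma dot_oz (h7 : (d : ZMod p) = 7) (h3 : 3 ≤ d) : vOne p d ⬝ᵥ vZ p d = (4 : ZMod p) := by
  simp only [dotProduct, vOne, one_mul]
  exact sum_z h7 h3

lemma dot_zo (h7 : (d : ZMod p) = 7) (h3 : 3 ≤ d) : vZ p d ⬝ᵥ vOne p d = (4 : ZMod p) := by
  simp only [dotProduct, vOne, mul_one]
  exact sum_z h7 h3

lemma dot_zz (h7 : (d : ZMod p) = 7) (h3 : 3 ≤ d) : vZ p d ⬝ᵥ vZ p d = (4 : ZMod p) := by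
  have : ∀ i : Fin d, vZ p d i * vZ p d i = vZ p d i := by
    intro i; unfold vZ; split_ifs <;> ring
  simp only [dotProduct, this]
  exact sum_z h7 h3

lemma dot_oe (h0 : 0 < d) : vOne p d ⬝ᵥ vE p d = (1 : ZMod p) := by
  simp only [dotProduct, vOne, one_mul]; exact sum_e h0

lemma dot_eo (h0 : 0 < d) : vE p d ⬝ᵥ vOne p d = (1 : ZMod p) := by
  simp only [dotProduct, vOne, mul_one]; exact sum_e h0

lemma dot_ee (h0 : 0 < d) : vE p d ⬝ᵥ vE p d = (1 : ZMod p) := by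
  have : ∀ i : Fin d, vE p d i * vE p d i = vE p d i := by
    intro i; unfold vE; split_ifs <;> ring
  simp only [dotProduct, this]; exact sum_e h0

lemma dot_ze : vZ p d ⬝ᵥ vE p d = (0 : ZMod p) := by
  apply Finset.sum_eq_zero
  intro i _
  unfold vZ vE
  split_ifs with h1 h2 <;> first | (exfalso; omega) | ring

lemma dot_ez : vE p d ⬝ᵥ vZ p d = (0 : ZMod p) := by
  apply Finset.sum_eq_zero
  intro i _
  unfold vZ vE
  split_ifs with h1 h2 <;> first | (exfalso; omega) | ring

lemma Bmat_mul_Cmat (h7 : (d : ZMod p) = 7) (h3 : 3 ≤ d) :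
    Bmat p d * Cmat p d = (4 : ZMod p) • 1 := by
  have h0 : 0 < d := by omega
  unfold Bmat Cmat
  simp only [mul_add, add_mul, mul_sub, sub_mul, smul_mul_assoc, mul_smul_comm,
    Matrix.one_mul, Matrix.mul_one, EE, dot_oo h7, dot_oz h7 h3, dot_zo h7 h3,
    dot_zz h7 h3, dot_oe h0, dot_eo h0, dot_ee h0, dot_ze, dot_ez]
  module

lemma vZ_eq_zero (hd2 : d = 2) : vZ p d = 0 := by
  funext i
  have := i.isLt
  unfold vZ
  rw [if_neg (by omega)]
  rfl

lemma Bmat_mul_C2 (h7 : (d : ZMod p) = 7) (hd2 : d = 2) (h5 : (5 : ZMod p) = 0) :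
    Bmat p d * C2mat p d = 1 := by
  have h6 : (6 : ZMod p) = 1 := by
    have : (6 : ZMod p) = 5 + 1 := by norm_num
    rw [this, h5, zero_add]
  have h30 : (30 : ZMod p) = 0 := by
    have : (30 : ZMod p) = 5 * 6 := by norm_num
    rw [this, h5, zero_mul]
  have hB : Bmat p d = (2 : ZMod p) • 1 + vecMulVec (vOne p d) (vOne p d) := by
    unfold Bmat
    rw [vZ_eq_zero hd2]
    ext i j
    simp [Matrix.vecMulVec_apply]
  have key : Bmat p d * C2mat p d
      = (6 : ZMod p) • 1 + (30 : ZMod p) • vecMulVec (vOne p d) (vOne p d) := by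
    rw [hB]
    unfold C2mat
    simp only [mul_add, add_mul, smul_mul_assoc, mul_smul_comm,
      Matrix.one_mul, Matrix.mul_one, EE, dot_oo h7]
    module
  rw [key, h6, h30, one_smul, zero_smul, add_zero]


end ETFAux

namespace ETFAux

variable (p d : ℕ)
lemma pair_card {a b : Fin (d+1)} (h : a ≠ b) : ({a, b} : Finset (Fin (d+1))).card = 2 := by
  rw [Finset.card_insert_of_notMem (by simpa using h), Finset.card_singleton]

variable {d} in
/-- the selection of `d` pairs: `{0, i+1}` for `i < d-1`, and `{1,2}` for `i = d-1`. -/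
def sig (hd : 1 < d) (i : Fin d) : Idx d :=
  if h : (i : ℕ) < d - 1 then
    ⟨{⟨0, by omega⟩, ⟨(i : ℕ) + 1, by omega⟩}, pair_card d (by simp [Fin.ext_iff])⟩
  else
    ⟨{⟨1, by omega⟩, ⟨2, by omega⟩}, pair_card d (by simp [Fin.ext_iff])⟩

variable {p d}

lemma GM_sig (hd : 1 < d) (i j : Fin d) :
    GM p d (sig hd i) (sig hd j) = Bmat p d i j := by
  have hBij : Bmat p d i j
      = 2 * (if i = j then 1 else 0) + 1
        - 2 * (vZ p d i * vE p d j + vE p d i * vZ p d j) := by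
    simp only [Bmat, Matrix.add_apply, Matrix.sub_apply, Matrix.smul_apply,
      Matrix.one_apply, Matrix.vecMulVec_apply, smul_eq_mul, vOne]
    split_ifs <;> ring
  rw [hBij]
  have hi' := i.isLt
  have hj' := j.isLt
  unfold GM sig
  by_cases hi : (i : ℕ) < d - 1 <;> by_cases hj : (j : ℕ) < d - 1
  · -- both small
    rw [dif_pos hi, dif_pos hj]
    simp only [Matrix.of_apply]
    by_cases hij : i = j
    · subst hij
      rw [Finset.inter_self, pair_card d (by simp [Fin.ext_iff])]
      have hz : vE p d i = 0 := by unfold vE; rw [if_neg (by omega)]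
      rw [if_pos rfl, hz]
      push_cast; ring
    · have hne : (i : ℕ) + 1 ≠ (j : ℕ) + 1 := by
        simp only [Ne, add_left_inj]
        exact fun h => hij (Fin.ext h)
      have hinter : ({⟨0, by omega⟩, ⟨(i : ℕ) + 1, by omega⟩} : Finset (Fin (d+1)))
          ∩ {⟨0, by omega⟩, ⟨(j : ℕ) + 1, by omega⟩} = {⟨0, by omega⟩} := by
        ext x
        simp only [Finset.mem_inter, Finset.mem_insert, Finset.mem_singleton, Fin.ext_iff]
        omega
      rw [hinter, Finset.card_singleton]
      have hzi : vE p d i = 0 := by unfold vE; rw [if_neg (by omega)]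
      have hzj : vE p d j = 0 := by unfold vE; rw [if_neg (by omega)]
      rw [if_neg hij, hzi, hzj]
      push_cast; ring
  · -- i small, j = last
    rw [dif_pos hi, dif_neg hj]
    simp only [Matrix.of_apply]
    have hzj : vZ p d j = 0 := by unfold vZ; rw [if_neg (by omega)]
    have hej : vE p d j = 1 := by unfold vE; rw [if_pos (by omega)]
    have hei : vE p d i = 0 := by unfold vE; rw [if_neg (by omega)]
    have hij : i ≠ j := by intro h; subst h; omega
    rw [if_neg hij, hzj, hej, hei]
    by_cases hsm : (i : ℕ) < 2
    · have hzi : vZ p d i = 0 := by unfold vZ; rw [if_neg (by omega)]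
      have hinter : ({⟨0, by omega⟩, ⟨(i : ℕ) + 1, by omega⟩} : Finset (Fin (d+1)))
          ∩ {⟨1, by omega⟩, ⟨2, by omega⟩} = {⟨(i : ℕ) + 1, by omega⟩} := by
        ext x
        simp only [Finset.mem_inter, Finset.mem_insert, Finset.mem_singleton, Fin.ext_iff]
        omega
      rw [hinter, Finset.card_singleton, hzi]
      push_cast; ring
    · have hzi : vZ p d i = 1 := by unfold vZ; rw [if_pos (by omega)]
      have hinter : ({⟨0, by omega⟩, ⟨(i : ℕ) + 1, by omega⟩} : Finset (Fin (d+1)))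
          ∩ {⟨1, by omega⟩, ⟨2, by omega⟩} = ∅ := by
        ext x
        simp only [Finset.mem_inter, Finset.mem_insert, Finset.mem_singleton,
          Finset.notMem_empty, iff_false, not_and, Fin.ext_iff]
        omega
      rw [hinter, Finset.card_empty, hzi]
      push_cast; ring
  · -- i last, j small
    rw [dif_neg hi, dif_pos hj]
    simp only [Matrix.of_apply]
    have hzi : vZ p d i = 0 := by unfold vZ; rw [if_neg (by omega)]
    have hei : vE p d i = 1 := by unfold vE; rw [if_pos (by omega)]
    have hej : vE p d j = 0 := by unfold vE; rw [if_neg (by omega)]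
    have hij : i ≠ j := by intro h; subst h; omega
    rw [if_neg hij, hzi, hei, hej]
    by_cases hsm : (j : ℕ) < 2
    · have hzj : vZ p d j = 0 := by unfold vZ; rw [if_neg (by omega)]
      have hinter : ({⟨1, by omega⟩, ⟨2, by omega⟩} : Finset (Fin (d+1)))
          ∩ {⟨0, by omega⟩, ⟨(j : ℕ) + 1, by omega⟩} = {⟨(j : ℕ) + 1, by omega⟩} := by
        ext x
        simp only [Finset.mem_inter, Finset.mem_insert, Finset.mem_singleton, Fin.ext_iff]
        omega
      rw [hinter, Finset.card_singleton, hzj]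
      push_cast; ring
    · have hzj : vZ p d j = 1 := by unfold vZ; rw [if_pos (by omega)]
      have hinter : ({⟨1, by omega⟩, ⟨2, by omega⟩} : Finset (Fin (d+1)))
          ∩ {⟨0, by omega⟩, ⟨(j : ℕ) + 1, by omega⟩} = ∅ := by
        ext x
        simp only [Finset.mem_inter, Finset.mem_insert, Finset.mem_singleton,
          Finset.notMem_empty, iff_false, not_and, Fin.ext_iff]
        omega
      rw [hinter, Finset.card_empty, hzj]
      push_cast; ring
  · -- both last
    rw [dif_neg hi, dif_neg hj]
    simp only [Matrix.of_apply]
    have hij : i = j := by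
      apply Fin.ext; omega
    subst hij
    rw [Finset.inter_self, pair_card d (by simp [Fin.ext_iff]), if_pos rfl]
    have hzi : vZ p d i = 0 := by unfold vZ; rw [if_neg (by omega)]
    rw [hzi]
    push_cast; ring

variable (p) in
def Pk (hd : 1 < d) : Matrix (Fin d) (Idx d) (ZMod p) :=
  Matrix.of fun i s => if s = sig hd i then 1 else 0

lemma Pk_GM_Pkt (hd : 1 < d) :
    Pk p hd * GM p d * (Pk p hd)ᵀ = Bmat p d := by
  ext i j
  rw [← GM_sig hd i j]
  simp only [Matrix.mul_apply, Matrix.transpose_apply, Pk, Matrix.of_apply]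
  have hrow : ∀ t, (∑ s : Idx d, (if s = sig hd i then (1 : ZMod p) else 0) * GM p d s t)
      = GM p d (sig hd i) t := by
    intro t
    rw [Finset.sum_congr rfl (fun s _ => ite_mul (s = sig hd i) (1 : ZMod p) 0 (GM p d s t))]
    simp only [one_mul, zero_mul]
    rw [Finset.sum_ite_eq' Finset.univ (sig hd i) (fun s => GM p d s t)]
    simp
  rw [Finset.sum_congr rfl (fun t _ => by rw [hrow t])]
  rw [Finset.sum_congr rfl (fun t _ =>
    mul_ite (t = sig hd j) (GM p d (sig hd i) t) (1 : ZMod p) 0)]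
  simp only [mul_one, mul_zero]
  rw [Finset.sum_ite_eq' Finset.univ (sig hd j) (fun t => GM p d (sig hd i) t)]
  simp


end ETFAux

namespace ETFAux

variable {p d : ℕ}

lemma rank_GM_ge [Fact p.Prime] (hd : 1 < d) (h7 : (d : ZMod p) = 7)
    (h2 : (2 : ZMod p) ≠ 0)
    (hcase : 3 ≤ d ∨ (d = 2 ∧ (5 : ZMod p) = 0)) : d ≤ (GM p d).rank := by
  have h4 : (4 : ZMod p) ≠ 0 := by
    intro h
    apply h2
    have h44 : (4 : ZMod p) = 2^2 := by norm_num
    rw [h44] at h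
    exact pow_eq_zero_iff (by norm_num) |>.mp h
  have hBC : ∃ C, Bmat p d * C = 1 := by
    rcases hcase with h3 | ⟨hd2, h5⟩
    · refine ⟨(4 : ZMod p)⁻¹ • Cmat p d, ?_⟩
      rw [Matrix.mul_smul, Bmat_mul_Cmat h7 h3, smul_smul, inv_mul_cancel₀ h4, one_smul]
    · exact ⟨C2mat p d, Bmat_mul_C2 h7 hd2 h5⟩
  obtain ⟨C, hC⟩ := hBC
  have hinv : IsUnit (Bmat p d) := by
    have := invertibleOfRightInverse _ _ hC
    exact isUnit_of_invertible _
  have hrankB : (Bmat p d).rank = d := by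
    rw [Matrix.rank_of_isUnit _ hinv, Fintype.card_fin]
  calc d = (Bmat p d).rank := hrankB.symm
    _ = (Pk p hd * GM p d * (Pk p hd)ᵀ).rank := by rw [Pk_GM_Pkt hd]
    _ ≤ (Pk p hd * GM p d).rank := Matrix.rank_mul_le_left _ _
    _ ≤ (GM p d).rank := Matrix.rank_mul_le_right _ _

lemma rank_GM [Fact p.Prime] (hd : 1 < d) (h7 : (d : ZMod p) = 7)
    (h2 : (2 : ZMod p) ≠ 0)
    (hcase : 3 ≤ d ∨ (d = 2 ∧ (5 : ZMod p) = 0)) : (GM p d).rank = d :=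
  le_antisymm (rank_GM_le h2 h7) (rank_GM_ge hd h7 h2 hcase)

end ETFAux


open ETFAux in
/-- For every integer `d > 1` and every odd prime `p` dividing `d - 7`, Gerzon's bound is
attained over `𝔽_p`: there is a `(3,1,12)`-ETF Gram matrix of size `n × n`,
`n = (d+1 choose 2) = d(d+1)/2`, of rank `d` over `ZMod p`. -/
theorem stmt_15 (d : ℕ) (hd : 1 < d) (p : ℕ) (hp : p.Prime) (hodd : Odd p)
    (hdvd : (p : ℤ) ∣ (d : ℤ) - 7) :
    ∃ G : Matrix (Fin ((d + 1).choose 2)) (Fin ((d + 1).choose 2)) (ZMod p),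
      G.IsSymm ∧ (∀ i, G i i = 3) ∧ (∀ i j, i ≠ j → (G i j) ^ 2 = 1) ∧
      G * G = (12 : ZMod p) • G ∧ G.rank = d := by
  haveI := Fact.mk hp
  have hp2 : p ≠ 2 := by
    rintro rfl
    exact (by decide : ¬ Odd 2) hodd
  have h2 : (2 : ZMod p) ≠ 0 := by
    intro h
    have h2' : ((2 : ℕ) : ZMod p) = 0 := by push_cast; exact h
    have hdd := (ZMod.natCast_eq_zero_iff 2 p).mp h2'
    exact hp2 ((Nat.prime_dvd_prime_iff_eq hp Nat.prime_two).mp hdd)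
  have h7 : (d : ZMod p) = 7 := by
    have h0 : (((d : ℤ) - 7 : ℤ) : ZMod p) = 0 :=
      (ZMod.intCast_zmod_eq_zero_iff_dvd _ p).mpr hdvd
    push_cast at h0
    exact sub_eq_zero.mp h0
  have hcase : 3 ≤ d ∨ (d = 2 ∧ (5 : ZMod p) = 0) := by
    by_cases h3 : 3 ≤ d
    · exact Or.inl h3
    · right
      have hd2 : d = 2 := by omega
      refine ⟨hd2, ?_⟩
      have h22 : ((d : ℕ) : ZMod p) = 2 := by rw [hd2]; norm_num
      rw [h22] at h7
      linear_combination -h7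
  let e : Fin ((d + 1).choose 2) ≃ Idx d := (Fintype.equivFinOfCardEq (card_Idx d)).symm
  refine ⟨(GM p d).submatrix e e, ?_, ?_, ?_, ?_, ?_⟩
  · show ((GM p d).submatrix e e)ᵀ = (GM p d).submatrix e e
    rw [Matrix.transpose_submatrix, GM_isSymm]
  · intro i
    exact GM_diag (e i)
  · intro i j hij
    exact GM_offdiag (fun h => hij (e.injective h))
  · rw [Matrix.submatrix_mul_equiv (GM p d) (GM p d) e e e, GM_mul_GM h2 h7]
    ext i j
    simp [Matrix.submatrix_apply, Matrix.smul_apply]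
  · rw [Matrix.rank_submatrix (GM p d) e e]
    exact rank_GM hd h7 h2 hcase
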